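/- For the Korányi gauge N(z,t) = (|z|^4 + t^2)^(1/4) on the Heisenberg group H^n = C^n × R with group law (z,t)∘(z',t') = (z+z', t+t'+2 Im⟨z,z'⟩), the function d_H(ξ,η) = N(η^{-1}∘ξ) satisfies the triangle inequality, i.e., d_H(ξ,ζ) ≤ d_H(ξ,η) + d_H(η,ζ) for all ξ, η, ζ ∈ H^n. -/

import Mathlib

open scoped BigOperators ComplexConjugate

/-- A point of `ℍⁿ = ℂⁿ × ℝ`. -/
abbrev HC (n : ℕ) := (Fin n → ℂ) × ℝ

/-- Heisenberg group law `(z,t)∘(z',t') = (z+z', t+t'+2 Im⟨z,z'⟩)`. -/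
noncomputable def cmul {n : ℕ} (ξ η : HC n) : HC n :=
  (ξ.1 + η.1, ξ.2 + η.2 + 2 * (∑ j, ξ.1 j * conj (η.1 j)).im)

/-- Heisenberg inverse. -/
def cinv {n : ℕ} (ξ : HC n) : HC n := (-ξ.1, -ξ.2)

/-- The Korányi gauge `N(z,t) = (|z|⁴ + t²)^(1/4)`. -/
noncomputable def NC {n : ℕ} (ξ : HC n) : ℝ :=
  ((∑ j, ‖ξ.1 j‖ ^ 2) ^ 2 + ξ.2 ^ 2) ^ ((1 : ℝ) / 4)

/-- The Korányi–Cygan distance `d_H(ξ,η) = N(η⁻¹∘ξ)`. -/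
noncomputable def dC {n : ℕ} (ξ η : HC n) : ℝ := NC (cmul (cinv η) ξ)

noncomputable def AC {n : ℕ} (ξ : HC n) : ℂ :=
  (∑ j, ‖ξ.1 j‖ ^ 2 : ℝ) + ξ.2 * Complex.I

lemma NC_nonneg {n : ℕ} (ξ : HC n) : 0 ≤ NC ξ := Real.rpow_nonneg (by positivity) _

lemma NC_sq {n : ℕ} (ξ : HC n) :
    NC ξ ^ 2 = Real.sqrt ((∑ j, ‖ξ.1 j‖ ^ 2) ^ 2 + ξ.2 ^ 2) := by
  have h : (0:ℝ) ≤ (∑ j, ‖ξ.1 j‖ ^ 2) ^ 2 + ξ.2 ^ 2 := by positivity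
  rw [NC, ← Real.rpow_natCast _ 2, ← Real.rpow_mul h, Real.sqrt_eq_rpow]
  norm_num

lemma abs_AC {n : ℕ} (ξ : HC n) : ‖AC ξ‖ = NC ξ ^ 2 := by
  rw [AC, Complex.norm_add_mul_I, NC_sq]

lemma AC_cmul {n : ℕ} (ξ η : HC n) :
    AC (cmul ξ η) = AC ξ + AC η + 2 * ∑ j, ξ.1 j * conj (η.1 j) := by
  apply Complex.ext
  · simp only [AC, cmul, Complex.add_re, Complex.ofReal_re, Complex.mul_re, Complex.I_re,
      Complex.I_im, Complex.ofReal_im, Complex.mul_im, Complex.re_sum, Complex.re_ofNat,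
      Complex.im_ofNat]
    have : ∀ j, ‖(ξ.1 + η.1) j‖ ^ 2
        = ‖ξ.1 j‖ ^ 2 + ‖η.1 j‖ ^ 2
          + 2 * (ξ.1 j * conj (η.1 j)).re := by
      intro j
      simp only [Pi.add_apply, Complex.sq_norm]
      exact Complex.normSq_add _ _
    rw [Finset.sum_congr rfl fun j _ => this j]
    rw [Finset.sum_add_distrib, Finset.sum_add_distrib, ← Finset.mul_sum]
    simp only [Complex.mul_re]
    ring
  · simp only [AC, cmul, Complex.add_im, Complex.ofReal_im, Complex.mul_im, Complex.I_im,
      Complex.I_re, Complex.ofReal_re, Complex.im_sum, Complex.re_ofNat, Complex.im_ofNat]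
    ring

lemma sum_abs_sq_le {n : ℕ} (ξ : HC n) : ∑ j, ‖ξ.1 j‖ ^ 2 ≤ NC ξ ^ 2 := by
  rw [NC_sq]
  rw [Real.le_sqrt (by positivity) (by positivity)]
  nlinarith [sq_nonneg ξ.2]

lemma abs_S_le {n : ℕ} (ξ η : HC n) :
    ‖∑ j, ξ.1 j * conj (η.1 j)‖ ≤ NC ξ * NC η := by
  have h1 : ‖∑ j, ξ.1 j * conj (η.1 j)‖
      ≤ ∑ j, ‖ξ.1 j‖ * ‖η.1 j‖ := by
    refine le_trans (norm_sum_le _ _) (le_of_eq (Finset.sum_congr rfl fun j _ => ?_))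
    rw [norm_mul, Complex.norm_conj]
  have h2 : (∑ j, ‖ξ.1 j‖ * ‖η.1 j‖) ^ 2
      ≤ (∑ j, ‖ξ.1 j‖ ^ 2) * ∑ j, ‖η.1 j‖ ^ 2 :=
    Finset.sum_mul_sq_le_sq_mul_sq _ _ _
  have h3 := sum_abs_sq_le ξ
  have h4 := sum_abs_sq_le η
  have hs : ∀ j, (0:ℝ) ≤ ‖ξ.1 j‖ ^ 2 := fun j => by positivity
  have h5 : (0:ℝ) ≤ ∑ j, ‖ξ.1 j‖ * ‖η.1 j‖ := by positivity
  have ha : (0:ℝ) ≤ ∑ j, ‖ξ.1 j‖ ^ 2 := by positivity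
  have hb : (0:ℝ) ≤ ∑ j, ‖η.1 j‖ ^ 2 := by positivity
  have h6 : (∑ j, ‖ξ.1 j‖ ^ 2) * (∑ j, ‖η.1 j‖ ^ 2)
      ≤ NC ξ ^ 2 * NC η ^ 2 := mul_le_mul h3 h4 hb (sq_nonneg _)
  have h7 : (∑ j, ‖ξ.1 j‖ * ‖η.1 j‖) ^ 2 ≤ (NC ξ * NC η) ^ 2 := by
    nlinarith
  have h8 : (0:ℝ) ≤ NC ξ * NC η := mul_nonneg (NC_nonneg ξ) (NC_nonneg η)
  nlinarith [norm_nonneg (∑ j, ξ.1 j * conj (η.1 j))]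

lemma NC_cmul_le {n : ℕ} (ξ η : HC n) : NC (cmul ξ η) ≤ NC ξ + NC η := by
  have key : ‖AC (cmul ξ η)‖ ≤ (NC ξ + NC η) ^ 2 := by
    rw [AC_cmul]
    calc ‖AC ξ + AC η + 2 * ∑ j, ξ.1 j * conj (η.1 j)‖
        ≤ ‖AC ξ‖ + ‖AC η‖
            + ‖2 * ∑ j, ξ.1 j * conj (η.1 j)‖ := by
          exact le_trans (norm_add_le _ _)
            (add_le_add_left (norm_add_le _ _) _)
      _ ≤ NC ξ ^ 2 + NC η ^ 2 + 2 * (NC ξ * NC η) := by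
          rw [abs_AC, abs_AC, norm_mul]
          have := abs_S_le ξ η
          simp only [Complex.norm_ofNat]
          linarith
      _ = (NC ξ + NC η) ^ 2 := by ring
  rw [abs_AC] at key
  nlinarith [NC_nonneg (cmul ξ η), NC_nonneg ξ, NC_nonneg η]

lemma cmul_key {n : ℕ} (ξ η ζ : HC n) :
    cmul (cinv ζ) ξ = cmul (cmul (cinv ζ) η) (cmul (cinv η) ξ) := by
  simp only [cmul, cinv, Prod.mk.injEq]
  constructor
  · funext j; simp
  · simp only [Complex.im_sum]
    have key : ∑ j, ((-ζ.1 + η.1) j * conj ((-η.1 + ξ.1) j)).im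
        = ∑ j, (((-ζ.1) j * conj (ξ.1 j)).im - ((-ζ.1) j * conj (η.1 j)).im
            - ((-η.1) j * conj (ξ.1 j)).im) := by
      refine Finset.sum_congr rfl fun j _ => ?_
      have e : (-ζ.1 + η.1) j * conj ((-η.1 + ξ.1) j)
          = (-ζ.1) j * conj (ξ.1 j) - (-ζ.1) j * conj (η.1 j) - (-η.1) j * conj (ξ.1 j)
            - η.1 j * conj (η.1 j) := by
        simp only [Pi.add_apply, Pi.neg_apply, map_add, map_neg]
        ring
      rw [e]
      simp [Complex.sub_im, Complex.mul_conj, Complex.mul_im]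
      ring
    rw [key, Finset.sum_sub_distrib, Finset.sum_sub_distrib]
    ring


/-- The Korányi–Cygan gauge distance satisfies the triangle inequality. -/
theorem koranyi_triangle_inequality {n : ℕ} (ξ η ζ : HC n) :
    dC ξ ζ ≤ dC ξ η + dC η ζ := by
  unfold dC
  rw [cmul_key ξ η ζ, add_comm]
  exact NC_cmul_le _ _
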